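/- arXiv:2505.15409 — 3 statements merged into one kernel-verified Lean document; each statement's English description precedes it below -/
import Mathlib

section
/- For every i ≤ m and j ≤ n, and every alignment γ of the first i elements of as and the first j elements of bs, the cost of γ is at least δ(i,j); that is, the edit-distance recursion is a lower bound for the cost of every alignment of the corresponding prefixes. -/
set_option maxRecDepth 4000

/-- An alignment of `as` and `bs` is a list of moves (pairs of options, never both
`none`) whose first-component projection is `as` and second-component projection is `bs`. -/
def IsAlignment {A B : Type*} (γ : List (Option A × Option B))
    (as : List A) (bs : List B) : Prop :=
  (∀ m ∈ γ, m ≠ ((none : Option A), (none : Option B))) ∧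
  γ.filterMap Prod.fst = as ∧
  γ.filterMap Prod.snd = bs

/-- Cost of a single move. -/
def moveCost {A B : Type*} (PL : A → ℕ∞) (PM : B → ℕ∞) (Psync : A → B → ℕ∞) :
    Option A × Option B → ℕ∞
  | (some a, none) => PL a
  | (none, some b) => PM b
  | (some a, some b) => Psync a b
  | (none, none) => 0

/-- Cost of an alignment: the sum of the costs of its moves. -/
def alignCost {A B : Type*} (PL : A → ℕ∞) (PM : B → ℕ∞) (Psync : A → B → ℕ∞)
    (γ : List (Option A × Option B)) : ℕ∞ :=
  (γ.map (moveCost PL PM Psync)).sum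

/-- The edit-distance recursion is a lower bound for the cost of every alignment of prefixes. -/
theorem delta_le_alignCost
    {A B : Type*} (PL : A → ℕ∞) (PM : B → ℕ∞) (Psync : A → B → ℕ∞)
    (as : List A) (bs : List B) (δ : ℕ → ℕ → ℕ∞)
    (hδ00 : δ 0 0 = 0)
    (hδL : ∀ i (hi : i < as.length), δ (i + 1) 0 = PL (as.get ⟨i, hi⟩) + δ i 0)
    (hδM : ∀ j (hj : j < bs.length), δ 0 (j + 1) = PM (bs.get ⟨j, hj⟩) + δ 0 j)
    (hδS : ∀ i j (hi : i < as.length) (hj : j < bs.length),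
      δ (i + 1) (j + 1) =
        min (Psync (as.get ⟨i, hi⟩) (bs.get ⟨j, hj⟩) + δ i j)
          (min (PL (as.get ⟨i, hi⟩) + δ i (j + 1))
            (PM (bs.get ⟨j, hj⟩) + δ (i + 1) j)))
    :
    ∀ i j, i ≤ as.length → j ≤ bs.length →
      ∀ γ : List (Option A × Option B),
        IsAlignment γ (as.take i) (bs.take j) →
          δ i j ≤ alignCost PL PM Psync γ := by
  intro i j hi hj γ
  induction γ using List.reverseRecOn generalizing i j with
  | nil =>
    rintro ⟨-, h1, h2⟩
    have hi0 : i = 0 := by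
      have := congrArg List.length h1
      simp [Nat.min_eq_left hi] at this
      omega
    have hj0 : j = 0 := by
      have := congrArg List.length h2
      simp [Nat.min_eq_left hj] at this
      omega
    subst hi0; subst hj0
    simp [hδ00, alignCost]
  | append_singleton γ' m ih =>
    rintro ⟨hne, h1, h2⟩
    have hcost : alignCost PL PM Psync (γ' ++ [m]) =
        alignCost PL PM Psync γ' + moveCost PL PM Psync m := by
      simp [alignCost]
    have hne' : ∀ x ∈ γ', x ≠ ((none : Option A), (none : Option B)) := fun x hx =>
      hne x (List.mem_append_left _ hx)
    obtain ⟨oa, ob⟩ := m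
    have hfst : γ'.filterMap Prod.fst ++ oa.toList = as.take i := by
      cases oa <;> simpa [List.filterMap_append] using h1
    have hsnd : γ'.filterMap Prod.snd ++ ob.toList = bs.take j := by
      cases ob <;> simpa [List.filterMap_append] using h2
    -- helper lemmas for splitting the prefix
    match oa, ob with
    | none, none => exact absurd rfl (hne _ (List.mem_append_right _ (List.mem_singleton_self _)))
    | some a, none =>
      obtain ⟨i', rfl⟩ : ∃ i', i = i' + 1 := by
        rcases i with _ | i'
        · simp at hfst
        · exact ⟨i', rfl⟩
      have hi' : i' < as.length := hi
      have htake : as.take (i' + 1) = as.take i' ++ [as.get ⟨i', hi'⟩] := by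
        rw [List.take_succ, List.getElem?_eq_getElem hi']; simp
      rw [htake] at hfst
      have hsplit := List.append_inj' hfst (by simp)
      obtain ⟨hl, hr⟩ := hsplit
      have ha : a = as.get ⟨i', hi'⟩ := by simpa using hr
      simp only [Option.toList] at hsnd
      rw [List.append_nil] at hsnd
      have hrec := ih i' j (le_of_lt hi') hj ⟨hne', by simpa using hl, hsnd⟩
      have hstep : δ (i' + 1) j ≤ PL (as.get ⟨i', hi'⟩) + δ i' j := by
        rcases j with _ | j'
        · exact (hδL i' hi').le
        · have hj' : j' < bs.length := hj
          rw [hδS i' j' hi' hj']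
          exact le_trans (min_le_right _ _) (min_le_left _ _)
      calc δ (i' + 1) j ≤ PL (as.get ⟨i', hi'⟩) + δ i' j := hstep
        _ ≤ PL (as.get ⟨i', hi'⟩) + alignCost PL PM Psync γ' := add_le_add_right hrec _
        _ = alignCost PL PM Psync (γ' ++ [(some a, none)]) := by
            rw [hcost, ha]; simp [moveCost, add_comm]
    | none, some b =>
      obtain ⟨j', rfl⟩ : ∃ j', j = j' + 1 := by
        rcases j with _ | j'
        · simp at hsnd
        · exact ⟨j', rfl⟩
      have hj' : j' < bs.length := hj
      have htake : bs.take (j' + 1) = bs.take j' ++ [bs.get ⟨j', hj'⟩] := by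
        rw [List.take_succ, List.getElem?_eq_getElem hj']; simp
      rw [htake] at hsnd
      obtain ⟨hl, hr⟩ := List.append_inj' hsnd (by simp)
      have hb : b = bs.get ⟨j', hj'⟩ := by simpa using hr
      simp only [Option.toList] at hfst
      rw [List.append_nil] at hfst
      have hrec := ih i j' hi (le_of_lt hj') ⟨hne', hfst, by simpa using hl⟩
      have hstep : δ i (j' + 1) ≤ PM (bs.get ⟨j', hj'⟩) + δ i j' := by
        rcases i with _ | i'
        · exact (hδM j' hj').le
        · have hi' : i' < as.length := hi
          rw [hδS i' j' hi' hj']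
          exact le_trans (min_le_right _ _) (min_le_right _ _)
      calc δ i (j' + 1) ≤ PM (bs.get ⟨j', hj'⟩) + δ i j' := hstep
        _ ≤ PM (bs.get ⟨j', hj'⟩) + alignCost PL PM Psync γ' := add_le_add_right hrec _
        _ = alignCost PL PM Psync (γ' ++ [(none, some b)]) := by
            rw [hcost, hb]; simp [moveCost, add_comm]
    | some a, some b =>
      obtain ⟨i', rfl⟩ : ∃ i', i = i' + 1 := by
        rcases i with _ | i'
        · simp at hfst
        · exact ⟨i', rfl⟩
      obtain ⟨j', rfl⟩ : ∃ j', j = j' + 1 := by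
        rcases j with _ | j'
        · simp at hsnd
        · exact ⟨j', rfl⟩
      have hi' : i' < as.length := hi
      have hj' : j' < bs.length := hj
      have htakeA : as.take (i' + 1) = as.take i' ++ [as.get ⟨i', hi'⟩] := by
        rw [List.take_succ, List.getElem?_eq_getElem hi']; simp
      have htakeB : bs.take (j' + 1) = bs.take j' ++ [bs.get ⟨j', hj'⟩] := by
        rw [List.take_succ, List.getElem?_eq_getElem hj']; simp
      rw [htakeA] at hfst
      rw [htakeB] at hsnd
      obtain ⟨hlA, hrA⟩ := List.append_inj' hfst (by simp)
      obtain ⟨hlB, hrB⟩ := List.append_inj' hsnd (by simp)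
      have ha : a = as.get ⟨i', hi'⟩ := by simpa using hrA
      have hb : b = bs.get ⟨j', hj'⟩ := by simpa using hrB
      have hrec := ih i' j' (le_of_lt hi') (le_of_lt hj')
        ⟨hne', by simpa using hlA, by simpa using hlB⟩
      have hstep : δ (i' + 1) (j' + 1) ≤
          Psync (as.get ⟨i', hi'⟩) (bs.get ⟨j', hj'⟩) + δ i' j' := by
        rw [hδS i' j' hi' hj']; exact min_le_left _ _
      calc δ (i' + 1) (j' + 1)
          ≤ Psync (as.get ⟨i', hi'⟩) (bs.get ⟨j', hj'⟩) + δ i' j' := hstep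
        _ ≤ Psync (as.get ⟨i', hi'⟩) (bs.get ⟨j', hj'⟩) + alignCost PL PM Psync γ' :=
            add_le_add_right hrec _
        _ = alignCost PL PM Psync (γ' ++ [(some a, some b)]) := by
            rw [hcost, ha, hb]; simp [moveCost, add_comm]
end

section
/- For every i ≤ m and j ≤ n there exists an alignment γ of the first i elements of as and the first j elements of bs whose cost equals δ(i,j); in particular, the value δ(i,j) is attained by a concrete alignment obtained by the decoding construction. -/
/-- The value δ(i,j) is attained by a concrete alignment of the prefixes. -/
theorem exists_alignment_cost_eq_delta
    {A B : Type*} (PL : A → ℕ∞) (PM : B → ℕ∞) (Psync : A → B → ℕ∞)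
    (as : List A) (bs : List B) (δ : ℕ → ℕ → ℕ∞)
    (hδ00 : δ 0 0 = 0)
    (hδL : ∀ i (hi : i < as.length), δ (i + 1) 0 = PL (as.get ⟨i, hi⟩) + δ i 0)
    (hδM : ∀ j (hj : j < bs.length), δ 0 (j + 1) = PM (bs.get ⟨j, hj⟩) + δ 0 j)
    (hδS : ∀ i j (hi : i < as.length) (hj : j < bs.length),
      δ (i + 1) (j + 1) =
        min (Psync (as.get ⟨i, hi⟩) (bs.get ⟨j, hj⟩) + δ i j)
          (min (PL (as.get ⟨i, hi⟩) + δ i (j + 1))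
            (PM (bs.get ⟨j, hj⟩) + δ (i + 1) j)))
    :
    ∀ i j, i ≤ as.length → j ≤ bs.length →
      ∃ γ : List (Option A × Option B),
        IsAlignment γ (as.take i) (bs.take j) ∧
          alignCost PL PM Psync γ = δ i j := by

  have htakeA : ∀ (k : ℕ) (hk : k < as.length),
      as.take (k+1) = as.take k ++ [as.get ⟨k, hk⟩] := by
    intro k hk
    rw [← List.take_concat_get hk, List.concat_eq_append]; rfl
  have htakeB : ∀ (k : ℕ) (hk : k < bs.length),
      bs.take (k+1) = bs.take k ++ [bs.get ⟨k, hk⟩] := by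
    intro k hk
    rw [← List.take_concat_get hk, List.concat_eq_append]; rfl
  have hcost : ∀ (γ : List (Option A × Option B)) (m : Option A × Option B),
      alignCost PL PM Psync (γ ++ [m]) =
        alignCost PL PM Psync γ + moveCost PL PM Psync m := by
    intro γ m; simp [alignCost]
  have main : ∀ n i j, i + j = n → i ≤ as.length → j ≤ bs.length →
      ∃ γ : List (Option A × Option B),
        IsAlignment γ (as.take i) (bs.take j) ∧
          alignCost PL PM Psync γ = δ i j := by
    intro n
    induction n using Nat.strong_induction_on with
    | _ n ih =>
      rintro i j rfl hi hj
      match i, j with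
      | 0, 0 =>
        exact ⟨[], ⟨by simp, by simp, by simp⟩, by simp [alignCost, hδ00]⟩
      | i+1, 0 =>
        have hi' : i < as.length := by omega
        obtain ⟨γ, ⟨h1, h2, h3⟩, hc⟩ := ih (i + 0) (by omega) i 0 rfl (by omega) (by omega)
        refine ⟨γ ++ [(some (as.get ⟨i, hi'⟩), none)], ⟨?_, ?_, ?_⟩, ?_⟩
        · intro m hm
          rcases List.mem_append.1 hm with h | h
          · exact h1 m h
          · simp at h; simp [h]
        · rw [htakeA i hi']; simp [List.filterMap_append, h2]
        · simp [List.filterMap_append, h3]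
        · rw [hcost, hc, hδL i hi', moveCost, add_comm]
      | 0, j+1 =>
        have hj' : j < bs.length := by omega
        obtain ⟨γ, ⟨h1, h2, h3⟩, hc⟩ := ih (0 + j) (by omega) 0 j rfl (by omega) (by omega)
        refine ⟨γ ++ [(none, some (bs.get ⟨j, hj'⟩))], ⟨?_, ?_, ?_⟩, ?_⟩
        · intro m hm
          rcases List.mem_append.1 hm with h | h
          · exact h1 m h
          · simp at h; simp [h]
        · simp [List.filterMap_append, h2]
        · rw [htakeB j hj']; simp [List.filterMap_append, h3]
        · rw [hcost, hc, hδM j hj', moveCost, add_comm]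
      | i+1, j+1 =>
        have hi' : i < as.length := by omega
        have hj' : j < bs.length := by omega
        have hδ := hδS i j hi' hj'
        rcases min_cases (Psync (as.get ⟨i, hi'⟩) (bs.get ⟨j, hj'⟩) + δ i j)
            (min (PL (as.get ⟨i, hi'⟩) + δ i (j + 1))
              (PM (bs.get ⟨j, hj'⟩) + δ (i + 1) j)) with ⟨heq, _⟩ | ⟨heq, _⟩
        · -- sync move
          obtain ⟨γ, ⟨h1, h2, h3⟩, hc⟩ := ih (i + j) (by omega) i j rfl (by omega) (by omega)
          refine ⟨γ ++ [(some (as.get ⟨i, hi'⟩), some (bs.get ⟨j, hj'⟩))], ⟨?_, ?_, ?_⟩, ?_⟩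
          · intro m hm
            rcases List.mem_append.1 hm with h | h
            · exact h1 m h
            · simp at h; simp [h]
          · rw [htakeA i hi']; simp [List.filterMap_append, h2]
          · rw [htakeB j hj']; simp [List.filterMap_append, h3]
          · rw [hcost, hc, hδ, heq, moveCost, add_comm]
        · rw [heq] at hδ
          rcases min_cases (PL (as.get ⟨i, hi'⟩) + δ i (j + 1))
              (PM (bs.get ⟨j, hj'⟩) + δ (i + 1) j) with ⟨heq2, _⟩ | ⟨heq2, _⟩
          · -- log move
            obtain ⟨γ, ⟨h1, h2, h3⟩, hc⟩ :=
              ih (i + (j+1)) (by omega) i (j+1) rfl (by omega) (by omega)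
            refine ⟨γ ++ [(some (as.get ⟨i, hi'⟩), none)], ⟨?_, ?_, ?_⟩, ?_⟩
            · intro m hm
              rcases List.mem_append.1 hm with h | h
              · exact h1 m h
              · simp at h; simp [h]
            · rw [htakeA i hi']; simp [List.filterMap_append, h2]
            · simp [List.filterMap_append, h3]
            · rw [hcost, hc, hδ, heq2, moveCost, add_comm]
          · -- model move
            obtain ⟨γ, ⟨h1, h2, h3⟩, hc⟩ :=
              ih ((i+1) + j) (by omega) (i+1) j rfl (by omega) (by omega)
            refine ⟨γ ++ [(none, some (bs.get ⟨j, hj'⟩))], ⟨?_, ?_, ?_⟩, ?_⟩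
            · intro m hm
              rcases List.mem_append.1 hm with h | h
              · exact h1 m h
              · simp at h; simp [h]
            · simp [List.filterMap_append, h2]
            · rw [htakeB j hj']; simp [List.filterMap_append, h3]
            · rw [hcost, hc, hδ, heq2, moveCost, add_comm]
  intro i j hi hj
  exact main (i + j) i j rfl hi hj
end

section
/- The value δ(m,n) equals the minimum, over all alignments γ of as = [a₁,…,a_m] and bs = [b₁,…,b_n], of the cost of γ; moreover this minimum is attained, i.e., there is an alignment of as and bs of cost δ(m,n) and every alignment of as and bs has cost at least δ(m,n). -/
/-- δ(m,n) is the attained minimum of alignment cost over all alignments of as and bs. -/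
theorem delta_eq_min_alignCost
    {A B : Type*} (PL : A → ℕ∞) (PM : B → ℕ∞) (Psync : A → B → ℕ∞)
    (as : List A) (bs : List B) (δ : ℕ → ℕ → ℕ∞)
    (hδ00 : δ 0 0 = 0)
    (hδL : ∀ i (hi : i < as.length), δ (i + 1) 0 = PL (as.get ⟨i, hi⟩) + δ i 0)
    (hδM : ∀ j (hj : j < bs.length), δ 0 (j + 1) = PM (bs.get ⟨j, hj⟩) + δ 0 j)
    (hδS : ∀ i j (hi : i < as.length) (hj : j < bs.length),
      δ (i + 1) (j + 1) =
        min (Psync (as.get ⟨i, hi⟩) (bs.get ⟨j, hj⟩) + δ i j)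
          (min (PL (as.get ⟨i, hi⟩) + δ i (j + 1))
            (PM (bs.get ⟨j, hj⟩) + δ (i + 1) j)))
    :
    (∃ γ : List (Option A × Option B),
        IsAlignment γ as bs ∧ alignCost PL PM Psync γ = δ as.length bs.length) ∧
    (∀ γ : List (Option A × Option B),
        IsAlignment γ as bs → δ as.length bs.length ≤ alignCost PL PM Psync γ) := by

  classical
  -- helper: cost of appending a move
  have cost_append : ∀ (γ : List (Option A × Option B)) (m : Option A × Option B),
      alignCost PL PM Psync (γ ++ [m]) = alignCost PL PM Psync γ + moveCost PL PM Psync m := by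
    intro γ m; simp [alignCost]
  -- take (i+1) = take i ++ [get i]
  have takeA : ∀ i (h : i < as.length), as.take (i+1) = as.take i ++ [as.get ⟨i, h⟩] := by
    intro i h
    rw [List.take_succ]
    simp [List.getElem?_eq_getElem h]
  have takeB : ∀ j (h : j < bs.length), bs.take (j+1) = bs.take j ++ [bs.get ⟨j, h⟩] := by
    intro j h
    rw [List.take_succ]
    simp [List.getElem?_eq_getElem h]
  -- step inequalities
  have stepL : ∀ i j (hi : i < as.length), j ≤ bs.length →
      δ (i+1) j ≤ PL (as.get ⟨i, hi⟩) + δ i j := by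
    intro i j hi hj
    cases j with
    | zero => rw [hδL i hi]
    | succ j =>
      have hj' : j < bs.length := hj
      rw [hδS i j hi hj']
      exact le_trans (min_le_right _ _) (min_le_left _ _)
  have stepM : ∀ i j (hj : j < bs.length), i ≤ as.length →
      δ i (j+1) ≤ PM (bs.get ⟨j, hj⟩) + δ i j := by
    intro i j hj hi
    cases i with
    | zero => rw [hδM j hj]
    | succ i =>
      have hi' : i < as.length := hi
      rw [hδS i j hi' hj]
      exact le_trans (min_le_right _ _) (min_le_right _ _)
  have stepS : ∀ i j (hi : i < as.length) (hj : j < bs.length),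
      δ (i+1) (j+1) ≤ Psync (as.get ⟨i, hi⟩) (bs.get ⟨j, hj⟩) + δ i j := by
    intro i j hi hj
    rw [hδS i j hi hj]
    exact min_le_left _ _
  -- existence
  have exist : ∀ k i j, i + j ≤ k → i ≤ as.length → j ≤ bs.length →
      ∃ γ, IsAlignment γ (as.take i) (bs.take j) ∧
        alignCost PL PM Psync γ = δ i j := by
    intro k
    induction k with
    | zero =>
      intro i j hk hi hj
      have hi0 : i = 0 := by omega
      have hj0 : j = 0 := by omega
      subst hi0; subst hj0
      exact ⟨[], ⟨by simp, by simp, by simp⟩, by simp [alignCost, hδ00]⟩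
    | succ k ih =>
      intro i j hk hi hj
      match i, j with
      | 0, 0 =>
        exact ⟨[], ⟨by simp, by simp, by simp⟩, by simp [alignCost, hδ00]⟩
      | i+1, 0 =>
        have hi' : i < as.length := hi
        obtain ⟨γ, ⟨hne, h1, h2⟩, hc⟩ := ih i 0 (by omega) (le_of_lt hi') hj
        refine ⟨γ ++ [(some (as.get ⟨i, hi'⟩), none)], ⟨?_, ?_, ?_⟩, ?_⟩
        · intro m hm
          rcases List.mem_append.1 hm with h | h
          · exact hne m h
          · simp at h; subst h; simp
        · rw [List.filterMap_append, h1, takeA i hi']; rfl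
        · rw [List.filterMap_append, h2]; simp
        · rw [cost_append, hc, hδL i hi']
          simp [moveCost, add_comm]
      | 0, j+1 =>
        have hj' : j < bs.length := hj
        obtain ⟨γ, ⟨hne, h1, h2⟩, hc⟩ := ih 0 j (by omega) hi (le_of_lt hj')
        refine ⟨γ ++ [(none, some (bs.get ⟨j, hj'⟩))], ⟨?_, ?_, ?_⟩, ?_⟩
        · intro m hm
          rcases List.mem_append.1 hm with h | h
          · exact hne m h
          · simp at h; subst h; simp
        · rw [List.filterMap_append, h1]; simp
        · rw [List.filterMap_append, h2, takeB j hj']; rfl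
        · rw [cost_append, hc, hδM j hj']
          simp [moveCost, add_comm]
      | i+1, j+1 =>
        have hi' : i < as.length := hi
        have hj' : j < bs.length := hj
        set a := as.get ⟨i, hi'⟩
        set b := bs.get ⟨j, hj'⟩
        rcases min_choice (Psync a b + δ i j)
            (min (PL a + δ i (j+1)) (PM b + δ (i+1) j)) with h | h
        · obtain ⟨γ, ⟨hne, h1, h2⟩, hc⟩ := ih i j (by omega) (le_of_lt hi') (le_of_lt hj')
          refine ⟨γ ++ [(some a, some b)], ⟨?_, ?_, ?_⟩, ?_⟩
          · intro m hm
            rcases List.mem_append.1 hm with hmm | hmm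
            · exact hne m hmm
            · simp at hmm; subst hmm; simp
          · rw [List.filterMap_append, h1, takeA i hi']; rfl
          · rw [List.filterMap_append, h2, takeB j hj']; rfl
          · rw [cost_append, hc, hδS i j hi' hj', h]
            simp [moveCost, add_comm]
        · rcases min_choice (PL a + δ i (j+1)) (PM b + δ (i+1) j) with h' | h'
          · obtain ⟨γ, ⟨hne, h1, h2⟩, hc⟩ := ih i (j+1) (by omega) (le_of_lt hi') hj
            refine ⟨γ ++ [(some a, none)], ⟨?_, ?_, ?_⟩, ?_⟩
            · intro m hm
              rcases List.mem_append.1 hm with hmm | hmm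
              · exact hne m hmm
              · simp at hmm; subst hmm; simp
            · rw [List.filterMap_append, h1, takeA i hi']; rfl
            · rw [List.filterMap_append, h2]; simp
            · rw [cost_append, hc, hδS i j hi' hj', h, h']
              simp [moveCost, add_comm]
          · obtain ⟨γ, ⟨hne, h1, h2⟩, hc⟩ := ih (i+1) j (by omega) hi (le_of_lt hj')
            refine ⟨γ ++ [(none, some b)], ⟨?_, ?_, ?_⟩, ?_⟩
            · intro m hm
              rcases List.mem_append.1 hm with hmm | hmm
              · exact hne m hmm
              · simp at hmm; subst hmm; simp
            · rw [List.filterMap_append, h1]; simp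
            · rw [List.filterMap_append, h2, takeB j hj']; rfl
            · rw [cost_append, hc, hδS i j hi' hj', h, h']
              simp [moveCost, add_comm]
  -- lower bound
  have lower : ∀ γ : List (Option A × Option B), ∀ i j, i ≤ as.length → j ≤ bs.length →
      IsAlignment γ (as.take i) (bs.take j) → δ i j ≤ alignCost PL PM Psync γ := by
    intro γ
    induction γ using List.reverseRecOn with
    | nil =>
      intro i j hi hj h
      obtain ⟨_, h1, h2⟩ := h
      have hi0 : i = 0 := by
        have := congrArg List.length h1
        simp [Nat.min_eq_left hi] at this
        omega
      have hj0 : j = 0 := by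
        have := congrArg List.length h2
        simp [Nat.min_eq_left hj] at this
        omega
      subst hi0; subst hj0
      simp [hδ00]
    | append_singleton γ m ihγ =>
      intro i j hi hj h
      obtain ⟨hne, h1, h2⟩ := h
      rw [List.filterMap_append] at h1 h2
      have hne' : ∀ x ∈ γ, x ≠ ((none : Option A), (none : Option B)) := by
        intro x hx; exact hne x (List.mem_append.2 (Or.inl hx))
      obtain ⟨oa, ob⟩ := m
      match oa, ob with
      | none, none =>
        exact absurd rfl (hne (none, none) (List.mem_append.2 (Or.inr (by simp))))
      | some a, none =>
        simp only [List.filterMap_cons, List.filterMap_nil] at h1 h2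
        -- h1 : γ.filterMap Prod.fst ++ [a] = as.take i
        rw [List.append_nil] at h2
        cases i with
        | zero =>
          exfalso
          have := congrArg List.length h1
          simp at this
        | succ i =>
          have hi' : i < as.length := hi
          rw [takeA i hi'] at h1
          obtain ⟨hγ1, ha⟩ := List.append_inj' h1 rfl
          have ha' : a = as.get ⟨i, hi'⟩ := by simpa using ha
          have ihr := ihγ i j (le_of_lt hi') hj ⟨hne', hγ1, h2⟩
          calc δ (i+1) j ≤ PL (as.get ⟨i, hi'⟩) + δ i j := stepL i j hi' hj
            _ ≤ PL (as.get ⟨i, hi'⟩) + alignCost PL PM Psync γ := by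
                exact add_le_add_right ihr _
            _ = alignCost PL PM Psync (γ ++ [(some a, none)]) := by
                rw [cost_append, ha']; simp [moveCost, add_comm]
      | none, some b =>
        simp only [List.filterMap_cons, List.filterMap_nil] at h1 h2
        rw [List.append_nil] at h1
        cases j with
        | zero =>
          exfalso
          have := congrArg List.length h2
          simp at this
        | succ j =>
          have hj' : j < bs.length := hj
          rw [takeB j hj'] at h2
          obtain ⟨hγ2, hb⟩ := List.append_inj' h2 rfl
          have hb' : b = bs.get ⟨j, hj'⟩ := by simpa using hb
          have ihr := ihγ i j hi (le_of_lt hj') ⟨hne', h1, hγ2⟩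
          calc δ i (j+1) ≤ PM (bs.get ⟨j, hj'⟩) + δ i j := stepM i j hj' hi
            _ ≤ PM (bs.get ⟨j, hj'⟩) + alignCost PL PM Psync γ := by
                exact add_le_add_right ihr _
            _ = alignCost PL PM Psync (γ ++ [(none, some b)]) := by
                rw [cost_append, hb']; simp [moveCost, add_comm]
      | some a, some b =>
        simp only [List.filterMap_cons, List.filterMap_nil] at h1 h2
        cases i with
        | zero =>
          exfalso
          have := congrArg List.length h1
          simp at this
        | succ i =>
        cases j with
        | zero =>
          exfalso
          have := congrArg List.length h2
          simp at this
        | succ j =>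
          have hi' : i < as.length := hi
          have hj' : j < bs.length := hj
          rw [takeA i hi'] at h1
          rw [takeB j hj'] at h2
          obtain ⟨hγ1, ha⟩ := List.append_inj' h1 rfl
          obtain ⟨hγ2, hb⟩ := List.append_inj' h2 rfl
          have ha' : a = as.get ⟨i, hi'⟩ := by simpa using ha
          have hb' : b = bs.get ⟨j, hj'⟩ := by simpa using hb
          have ihr := ihγ i j (le_of_lt hi') (le_of_lt hj') ⟨hne', hγ1, hγ2⟩
          calc δ (i+1) (j+1) ≤ Psync (as.get ⟨i, hi'⟩) (bs.get ⟨j, hj'⟩) + δ i j :=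
                stepS i j hi' hj'
            _ ≤ Psync (as.get ⟨i, hi'⟩) (bs.get ⟨j, hj'⟩) + alignCost PL PM Psync γ := by
                exact add_le_add_right ihr _
            _ = alignCost PL PM Psync (γ ++ [(some a, some b)]) := by
                rw [cost_append, ha', hb']; simp [moveCost, add_comm]
  constructor
  · obtain ⟨γ, hγ, hc⟩ := exist (as.length + bs.length) as.length bs.length le_rfl le_rfl le_rfl
    rw [List.take_length, List.take_length] at hγ
    exact ⟨γ, hγ, hc⟩
  · intro γ hγ
    exact lower γ as.length bs.length le_rfl le_rfl
      (by rwa [List.take_length, List.take_length])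
end
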